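/- Let $d \ge 3$ and let $v_1,\dots,v_{d+4} \in \mathbb{C}^{d+1}$. Fix a 6-element subset $I = \{i_1 < \cdots < i_6\}$ of $\{1,\dots,d+4\}$ with complement $I^c = \{j_1 < \cdots < j_{d-2}\}$, and abbreviate the index string $j_1 \cdots j_{d-2}$ by $J$. Then $[i_1 i_4 i_5\, J][i_2 i_5 i_6\, J][i_3 i_6 i_1\, J][i_2 i_3 i_4\, J] - [i_2 i_4 i_5\, J][i_3 i_5 i_6\, J][i_4 i_6 i_1\, J][i_1 i_2 i_3\, J] + [i_2 i_4 i_5\, J][i_3 i_5 i_6\, J][i_3 i_6 i_1\, J][i_1 i_2 i_4\, J] - [i_2 i_4 i_5\, J][i_2 i_5 i_6\, J][i_3 i_6 i_1\, J][i_1 i_3 i_4\, J] = 0$ if and only if $[i_1 i_2 i_3\, J][i_1 i_4 i_5\, J][i_2 i_4 i_6\, J][i_3 i_5 i_6\, J] - [i_1 i_2 i_4\, J][i_1 i_3 i_5\, J][i_2 i_3 i_6\, J][i_4 i_5 i_6\, J] = 0$. -/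

import Mathlib

/-- The bracket `[k₁ k₂ ⋯ k_{d+1}]`: the determinant of the `(d+1) × (d+1)` matrix
whose columns are `v (k 0), …, v (k d)` in that order. -/
noncomputable def brk {d n : ℕ} (v : Fin n → Fin (d + 1) → ℂ)
    (k : Fin (d + 1) → Fin n) : ℂ :=
  Matrix.det (Matrix.of fun r c => v (k c) r)

/-- The index list `(a, b, c, j₁, …, j_{d-2})` of length `d+1`. -/
def cat3 {d n : ℕ} (a b c : Fin n) (j : Fin (d - 2) → Fin n) : Fin (d + 1) → Fin n :=
  fun col =>
    if h : (col : ℕ) < 3 then ![a, b, c] ⟨col, h⟩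
    else j ⟨(col : ℕ) - 3, by have := col.isLt; omega⟩

noncomputable section

/-- columns (x, y, z, u 0, ..., u (d-3)) at vector level -/
def colFun {d : ℕ} (x y z : Fin (d+1) → ℂ) (u : Fin (d-2) → Fin (d+1) → ℂ) :
    Fin (d+1) → Fin (d+1) → ℂ :=
  fun col =>
    if _h0 : (col : ℕ) = 0 then x
    else if _h1 : (col : ℕ) = 1 then y
    else if _h2 : (col : ℕ) = 2 then z
    else u ⟨(col : ℕ) - 3, by have := col.isLt; omega⟩

noncomputable def B {d : ℕ} (u : Fin (d-2) → Fin (d+1) → ℂ) (x y z : Fin (d+1) → ℂ) : ℂ :=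
  Matrix.det (Matrix.of fun r c => colFun x y z u c r)

/-- the family (x, z, w, t, u 0, ..., u (d-3)) -/
def quad {d : ℕ} (x z w t : Fin (d+1) → ℂ) (u : Fin (d-2) → Fin (d+1) → ℂ) :
    Fin (d+2) → Fin (d+1) → ℂ :=
  fun k =>
    if _h0 : (k : ℕ) = 0 then x
    else if _h1 : (k : ℕ) = 1 then z
    else if _h2 : (k : ℕ) = 2 then w
    else if _h3 : (k : ℕ) = 3 then t
    else u ⟨(k : ℕ) - 4, by have := k.isLt; omega⟩

lemma succAbove_val {d : ℕ} (k : Fin (d+2)) (q : Fin (d+1)) :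
    ((k.succAbove q) : ℕ) = if (q:ℕ) < (k:ℕ) then (q:ℕ) else (q:ℕ)+1 := by
  rw [Fin.succAbove]
  split_ifs with h h' h' <;>
    simp_all [Fin.lt_def, Fin.coe_castSucc, Fin.val_succ] <;> omega

end
section
open Matrix

lemma cramer_dep {d : ℕ} (U : Fin (d+2) → Fin (d+1) → ℂ) (r : Fin (d+1)) :
    ∑ k : Fin (d+2), ((-1:ℂ))^(k:ℕ) *
      Matrix.det (Matrix.of fun p q => U (k.succAbove q) p) * U k r = 0 := by
  set M : Matrix (Fin (d+2)) (Fin (d+2)) ℂ :=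
    Matrix.of fun p q => if h : (p:ℕ) < d+1 then U q ⟨p, h⟩ else U q r with hM
  have hdet : M.det = 0 := by
    refine Matrix.det_zero_of_row_eq (i := Fin.castSucc r) (j := Fin.last (d+1))
      (Fin.castSucc_lt_last r).ne ?_
    funext q
    simp only [hM, Matrix.of_apply]
    rw [dif_pos (by simp; omega), dif_neg (by simp)]
    congr 1
  have hexp := Matrix.det_succ_row (n := d+1) M (Fin.last (d+1))
  rw [hdet] at hexp
  have hminor : ∀ jj : Fin (d+2),
      M.submatrix (Fin.last (d+1)).succAbove jj.succAbove =
        Matrix.of fun p q => U (jj.succAbove q) p := by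
    intro jj
    ext p q
    simp only [Matrix.submatrix_apply, Fin.succAbove_last, hM, Matrix.of_apply]
    rw [dif_pos (by simp; omega)]
    congr 1
  have hlast : ∀ jj : Fin (d+2), M (Fin.last (d+1)) jj = U jj r := by
    intro jj
    simp only [hM, Matrix.of_apply]
    rw [dif_neg (by simp)]
  have key : (0:ℂ) = ∑ jj : Fin (d+2),
      (-1:ℂ)^(d+1+(jj:ℕ)) * U jj r * (Matrix.of fun p q => U (jj.succAbove q) p).det := by
    refine hexp.trans (Finset.sum_congr rfl fun jj _ => ?_)
    rw [hminor jj, hlast jj, Fin.val_last]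
  have hsq : (-1:ℂ)^(d+1) * (-1:ℂ)^(d+1) = 1 := by
    rw [← pow_add]; exact Even.neg_one_pow ⟨d+1, by ring⟩
  have h2 := congrArg (fun x => (-1:ℂ)^(d+1) * x) key
  simp only [mul_zero, Finset.mul_sum] at h2
  refine Eq.trans (Finset.sum_congr rfl fun jj _ => ?_) h2.symm
  rw [pow_add]
  set D := (Matrix.of fun p q => U (jj.succAbove q) p).det with hD
  linear_combination (-((-1:ℂ)^(jj:ℕ) * D * U jj r)) * hsq

end
section
open Matrix

lemma brk_cat3 {d n : ℕ} (v : Fin n → Fin (d+1) → ℂ) (a b c : Fin n)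
    (j : Fin (d-2) → Fin n) :
    brk v (cat3 a b c j) = B (fun t => v (j t)) (v a) (v b) (v c) := by
  have hvec : ∀ m : Fin 3, v (![a, b, c] m) =
      if (m:ℕ) = 0 then v a else if (m:ℕ) = 1 then v b else v c := by
    intro m; fin_cases m <;> simp
  unfold brk B
  congr 1
  ext r c'
  simp only [Matrix.of_apply, cat3, colFun]
  split_ifs with h h0 h1 h2 <;> try (exfalso; omega)
  · rw [hvec]; simp [h0]
  · rw [hvec]; simp [h0, h1]
  · rw [hvec]; simp [h0, h1, h2]
  · rfl

lemma colMatrix_update {d : ℕ} (hd : 3 ≤ d) (u : Fin (d-2) → Fin (d+1) → ℂ)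
    (x y z g : Fin (d+1) → ℂ) :
    (Matrix.of fun r c => colFun x y z u c r).updateCol ⟨2, by omega⟩ g =
      Matrix.of fun r c => colFun x y g u c r := by
  ext r c
  rw [Matrix.updateCol_apply]
  split_ifs with h
  · subst h; simp [colFun]
  · simp only [Matrix.of_apply, colFun]
    split_ifs with h0 h1 h2 <;> try rfl
    exact absurd (Fin.ext h2) h

lemma det_updateColumn_sum' {n m : ℕ} (M : Matrix (Fin n) (Fin n) ℂ) (jj : Fin n)
    (c : Fin m → ℂ) (g : Fin m → Fin n → ℂ) :
    (M.updateCol jj (∑ k, c k • g k)).det = ∑ k, c k * (M.updateCol jj (g k)).det := by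
  classical
  have H : ∀ s : Finset (Fin m), (M.updateCol jj (∑ k ∈ s, c k • g k)).det =
      ∑ k ∈ s, c k * (M.updateCol jj (g k)).det := by
    intro s
    induction s using Finset.induction_on with
    | empty =>
      simp only [Finset.sum_empty]
      exact Matrix.det_eq_zero_of_column_eq_zero jj (fun i => by simp)
    | insert _ _ hk ih =>
      rw [Finset.sum_insert hk, Finset.sum_insert hk, Matrix.det_updateCol_add,
        Matrix.det_updateCol_smul, ih]
      try simp [smul_eq_mul]
  exact H Finset.univ

lemma B_sum {d m : ℕ} (hd : 3 ≤ d) (u : Fin (d-2) → Fin (d+1) → ℂ)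
    (x y : Fin (d+1) → ℂ) (c : Fin m → ℂ) (g : Fin m → Fin (d+1) → ℂ) :
    B u x y (∑ k, c k • g k) = ∑ k, c k * B u x y (g k) := by
  have hB : ∀ q : Fin (d+1) → ℂ, B u x y q =
      ((Matrix.of fun r c' => colFun x y (0 : Fin (d+1) → ℂ) u c' r).updateCol
        ⟨2, by omega⟩ q).det := by
    intro q
    rw [colMatrix_update hd]
    rfl
  rw [hB, det_updateColumn_sum']
  exact Finset.sum_congr rfl fun k _ => by rw [hB]

end
section
open Matrix

variable {d : ℕ}

lemma B_zero_third (hd : 3 ≤ d) (u : Fin (d-2) → Fin (d+1) → ℂ) (x y : Fin (d+1) → ℂ) :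
    B u x y 0 = 0 := by
  apply Matrix.det_eq_zero_of_column_eq_zero (⟨2, by omega⟩ : Fin (d+1))
  intro r
  simp [colFun]

lemma B_self_02 (hd : 3 ≤ d) (u : Fin (d-2) → Fin (d+1) → ℂ) (x y : Fin (d+1) → ℂ) :
    B u x y x = 0 := by
  apply Matrix.det_zero_of_column_eq (i := (⟨0, by omega⟩ : Fin (d+1))) (j := ⟨2, by omega⟩)
  · simp [Fin.ext_iff]
  · intro r; simp [colFun]

lemma B_u_col (hd : 3 ≤ d) (u : Fin (d-2) → Fin (d+1) → ℂ) (x y : Fin (d+1) → ℂ)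
    (s : Fin (d-2)) : B u x y (u s) = 0 := by
  apply Matrix.det_zero_of_column_eq (i := (⟨2, by omega⟩ : Fin (d+1)))
    (j := ⟨(s:ℕ)+3, by have := s.isLt; omega⟩)
  · simp [Fin.ext_iff]
  · intro r
    simp only [Matrix.of_apply, colFun]
    split_ifs <;> first | rfl | omega | exact congrFun (congrArg u (Fin.ext (by omega))) r

lemma B_swap01 (hd : 3 ≤ d) (u : Fin (d-2) → Fin (d+1) → ℂ) (x y z : Fin (d+1) → ℂ) :
    B u x y z = - B u y x z := by
  have hne : (⟨0, by omega⟩ : Fin (d+1)) ≠ ⟨1, by omega⟩ := by simp [Fin.ext_iff]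
  have hmat : (Matrix.of fun r c => colFun y x z u c r) =
      (Matrix.of fun r c => colFun x y z u c r).submatrix id
        (Equiv.swap ⟨0, by omega⟩ ⟨1, by omega⟩) := by
    ext r c
    simp only [Matrix.submatrix_apply, id_eq, Matrix.of_apply]
    by_cases h0 : c = (⟨0, by omega⟩ : Fin (d+1))
    · subst h0; rw [Equiv.swap_apply_left]; simp [colFun]
    · by_cases h1 : c = (⟨1, by omega⟩ : Fin (d+1))
      · subst h1; rw [Equiv.swap_apply_right]; simp [colFun]
      · rw [Equiv.swap_apply_of_ne_of_ne h0 h1]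
        simp only [colFun]
        split_ifs with ha hb hc <;> try rfl
        · exact absurd (Fin.ext ha) h0
        · exact absurd (Fin.ext hb) h1
  have := Matrix.det_permute' (Equiv.swap (⟨0, by omega⟩ : Fin (d+1)) ⟨1, by omega⟩)
    (Matrix.of fun r c => colFun x y z u c r)
  rw [Equiv.Perm.sign_swap hne] at this
  unfold B
  rw [hmat, this]
  push_cast
  ring

lemma B_swap12 (hd : 3 ≤ d) (u : Fin (d-2) → Fin (d+1) → ℂ) (x y z : Fin (d+1) → ℂ) :
    B u x y z = - B u x z y := by
  have hne : (⟨1, by omega⟩ : Fin (d+1)) ≠ ⟨2, by omega⟩ := by simp [Fin.ext_iff]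
  have hmat : (Matrix.of fun r c => colFun x z y u c r) =
      (Matrix.of fun r c => colFun x y z u c r).submatrix id
        (Equiv.swap ⟨1, by omega⟩ ⟨2, by omega⟩) := by
    ext r c
    simp only [Matrix.submatrix_apply, id_eq, Matrix.of_apply]
    by_cases h0 : c = (⟨1, by omega⟩ : Fin (d+1))
    · subst h0; rw [Equiv.swap_apply_left]; simp [colFun]
    · by_cases h1 : c = (⟨2, by omega⟩ : Fin (d+1))
      · subst h1; rw [Equiv.swap_apply_right]; simp [colFun]
      · rw [Equiv.swap_apply_of_ne_of_ne h0 h1]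
        simp only [colFun]
        split_ifs with ha hb hc <;> try rfl
        · exact absurd (Fin.ext hb) h0
        · exact absurd (Fin.ext hc) h1
  have := Matrix.det_permute' (Equiv.swap (⟨1, by omega⟩ : Fin (d+1)) ⟨2, by omega⟩)
    (Matrix.of fun r c => colFun x y z u c r)
  rw [Equiv.Perm.sign_swap hne] at this
  unfold B
  rw [hmat, this]
  push_cast
  ring

lemma B_cyc (hd : 3 ≤ d) (u : Fin (d-2) → Fin (d+1) → ℂ) (x y z : Fin (d+1) → ℂ) :
    B u x y z = B u z x y := by
  rw [B_swap12 hd, B_swap01 hd, neg_neg]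

lemma B_cyc2 (hd : 3 ≤ d) (u : Fin (d-2) → Fin (d+1) → ℂ) (x y z : Fin (d+1) → ℂ) :
    B u x y z = B u y z x := by
  rw [B_cyc hd, B_cyc hd]

end
section
open Matrix

variable {d : ℕ}

lemma quad_minor (hd : 3 ≤ d) (x z w t : Fin (d+1) → ℂ) (u : Fin (d-2) → Fin (d+1) → ℂ)
    (k : Fin (d+2)) (a b c : Fin (d+1) → ℂ)
    (hk : ∀ q : Fin (d+1), quad x z w t u (k.succAbove q) = colFun a b c u q) :
    (Matrix.of fun p q => quad x z w t u (k.succAbove q) p) = Matrix.of fun r c' => colFun a b c u c' r := by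
  ext p q
  simp only [Matrix.of_apply]
  rw [hk q]

set_option maxHeartbeats 2000000 in
lemma pluecker (hd : 3 ≤ d) (u : Fin (d-2) → Fin (d+1) → ℂ)
    (x y z w t : Fin (d+1) → ℂ) :
    B u x y z * B u x w t - B u x y w * B u x z t + B u x y t * B u x z w = 0 := by
  set U := quad x z w t u with hU
  set c : Fin (d+2) → ℂ := fun k =>
    (-1:ℂ)^(k:ℕ) * Matrix.det (Matrix.of fun p q => U (k.succAbove q) p) with hc
  have hdep : ∑ k, c k • U k = 0 := by
    funext r
    have := cramer_dep U r
    simpa [Finset.sum_apply, hc, mul_assoc] using this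
  have h0 : (0:ℂ) = ∑ k, c k * B u x y (U k) := by
    rw [← B_sum hd, hdep, B_zero_third hd]
  -- vanishing for k ≥ 4
  have hUval : ∀ k : Fin (d+2), 4 ≤ (k:ℕ) → ∃ s, U k = u s := by
    intro k hk
    refine ⟨⟨(k:ℕ)-4, by have := k.isLt; omega⟩, ?_⟩
    simp only [hU, quad]
    rw [dif_neg (by omega), dif_neg (by omega), dif_neg (by omega), dif_neg (by omega)]
  have hvan : ∀ k ∈ Finset.univ, k ∉ ({⟨0, by omega⟩, ⟨1, by omega⟩, ⟨2, by omega⟩,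
      ⟨3, by omega⟩} : Finset (Fin (d+2))) → c k * B u x y (U k) = 0 := by
    intro k _ hk
    simp only [Finset.mem_insert, Finset.mem_singleton, Fin.ext_iff] at hk
    push_neg at hk
    obtain ⟨s, hs⟩ := hUval k (by omega)
    rw [hs, B_u_col hd, mul_zero]
  rw [← Finset.sum_subset (Finset.subset_univ _) hvan] at h0
  -- minor identifications
  have m1 : ∀ q : Fin (d+1), U ((⟨1, by omega⟩ : Fin (d+2)).succAbove q) = colFun x w t u q := by
    intro q
    have hv : (((⟨1, by omega⟩ : Fin (d+2)).succAbove q : Fin (d+2)) : ℕ) =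
        if (q:ℕ) < 1 then (q:ℕ) else (q:ℕ)+1 := succAbove_val _ q
    rcases Nat.lt_or_ge (q:ℕ) 1 with hq | hq
    · rw [if_pos hq] at hv
      simp only [hU, quad, colFun]
      split_ifs <;> first | rfl | omega | exact congrArg u (by simp only [Fin.mk.injEq]; omega)
    · rw [if_neg (by omega)] at hv
      simp only [hU, quad, colFun]
      split_ifs <;> first | rfl | omega | exact congrArg u (by simp only [Fin.mk.injEq]; omega)
  have m2 : ∀ q : Fin (d+1), U ((⟨2, by omega⟩ : Fin (d+2)).succAbove q) = colFun x z t u q := by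
    intro q
    have hv : (((⟨2, by omega⟩ : Fin (d+2)).succAbove q : Fin (d+2)) : ℕ) =
        if (q:ℕ) < 2 then (q:ℕ) else (q:ℕ)+1 := succAbove_val _ q
    rcases Nat.lt_or_ge (q:ℕ) 2 with hq | hq
    · rw [if_pos hq] at hv
      simp only [hU, quad, colFun]
      split_ifs <;> first | rfl | omega | exact congrArg u (by simp only [Fin.mk.injEq]; omega)
    · rw [if_neg (by omega)] at hv
      simp only [hU, quad, colFun]
      split_ifs <;> first | rfl | omega | exact congrArg u (by simp only [Fin.mk.injEq]; omega)
  have m3 : ∀ q : Fin (d+1), U ((⟨3, by omega⟩ : Fin (d+2)).succAbove q) = colFun x z w u q := by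
    intro q
    have hv : (((⟨3, by omega⟩ : Fin (d+2)).succAbove q : Fin (d+2)) : ℕ) =
        if (q:ℕ) < 3 then (q:ℕ) else (q:ℕ)+1 := succAbove_val _ q
    rcases Nat.lt_or_ge (q:ℕ) 3 with hq | hq
    · rw [if_pos hq] at hv
      simp only [hU, quad, colFun]
      split_ifs <;> first | rfl | omega | exact congrArg u (by simp only [Fin.mk.injEq]; omega)
    · rw [if_neg (by omega)] at hv
      simp only [hU, quad, colFun]
      split_ifs <;> first | rfl | omega | exact congrArg u (by simp only [Fin.mk.injEq]; omega)
  have hc1 : c ⟨1, by omega⟩ = - B u x w t := by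
    have hm : (Matrix.of fun p q => U ((⟨1, by omega⟩ : Fin (d+2)).succAbove q) p) =
        Matrix.of fun r c' => colFun x w t u c' r := by
      ext p q; exact congrFun (m1 q) p
    simp only [hc]
    rw [hm]
    show (-1:ℂ)^(1:ℕ) * B u x w t = - B u x w t
    norm_num
  have hc2 : c ⟨2, by omega⟩ = B u x z t := by
    have hm : (Matrix.of fun p q => U ((⟨2, by omega⟩ : Fin (d+2)).succAbove q) p) =
        Matrix.of fun r c' => colFun x z t u c' r := by
      ext p q; exact congrFun (m2 q) p
    simp only [hc]
    rw [hm]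
    show (-1:ℂ)^(2:ℕ) * B u x z t = B u x z t
    norm_num
  have hc3 : c ⟨3, by omega⟩ = - B u x z w := by
    have hm : (Matrix.of fun p q => U ((⟨3, by omega⟩ : Fin (d+2)).succAbove q) p) =
        Matrix.of fun r c' => colFun x z w u c' r := by
      ext p q; exact congrFun (m3 q) p
    simp only [hc]
    rw [hm]
    show (-1:ℂ)^(3:ℕ) * B u x z w = - B u x z w
    norm_num
  have hU0 : U ⟨0, by omega⟩ = x := rfl
  have hU1 : U ⟨1, by omega⟩ = z := rfl
  have hU2 : U ⟨2, by omega⟩ = w := rfl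
  have hU3 : U ⟨3, by omega⟩ = t := rfl
  rw [Finset.sum_insert (by simp [Fin.ext_iff]), Finset.sum_insert (by simp [Fin.ext_iff]),
    Finset.sum_insert (by simp [Fin.ext_iff]), Finset.sum_singleton] at h0
  rw [hU0, hU1, hU2, hU3, hc1, hc2, hc3, B_self_02 hd, mul_zero] at h0
  linear_combination h0

end
set_option maxHeartbeats 1000000 in
theorem expanded_gc_equation_iff_standard_equation (d : ℕ) (hd : 3 ≤ d)
    (v : Fin (d + 4) → Fin (d + 1) → ℂ)
    (i : Fin 6 → Fin (d + 4)) (j : Fin (d - 2) → Fin (d + 4))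
    (hi : StrictMono i) (hj : StrictMono j)
    (hcompl : ∀ k : Fin (d + 4), (∃ a, i a = k) ↔ ¬ (∃ b, j b = k)) :
    (brk v (cat3 (i 0) (i 3) (i 4) j) * brk v (cat3 (i 1) (i 4) (i 5) j) *
          brk v (cat3 (i 2) (i 5) (i 0) j) * brk v (cat3 (i 1) (i 2) (i 3) j) -
        brk v (cat3 (i 1) (i 3) (i 4) j) * brk v (cat3 (i 2) (i 4) (i 5) j) *
          brk v (cat3 (i 3) (i 5) (i 0) j) * brk v (cat3 (i 0) (i 1) (i 2) j) +
        brk v (cat3 (i 1) (i 3) (i 4) j) * brk v (cat3 (i 2) (i 4) (i 5) j) *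
          brk v (cat3 (i 2) (i 5) (i 0) j) * brk v (cat3 (i 0) (i 1) (i 3) j) -
        brk v (cat3 (i 1) (i 3) (i 4) j) * brk v (cat3 (i 1) (i 4) (i 5) j) *
          brk v (cat3 (i 2) (i 5) (i 0) j) * brk v (cat3 (i 0) (i 2) (i 3) j) = 0) ↔
    (brk v (cat3 (i 0) (i 1) (i 2) j) * brk v (cat3 (i 0) (i 3) (i 4) j) *
          brk v (cat3 (i 1) (i 3) (i 5) j) * brk v (cat3 (i 2) (i 4) (i 5) j) -
        brk v (cat3 (i 0) (i 1) (i 3) j) * brk v (cat3 (i 0) (i 2) (i 4) j) *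
          brk v (cat3 (i 1) (i 2) (i 5) j) * brk v (cat3 (i 3) (i 4) (i 5) j) = 0) := by
  clear hi hj hcompl
  simp only [brk_cat3]
  set u : Fin (d-2) → Fin (d+1) → ℂ := fun t => v (j t) with hu
  set v0 := v (i 0)
  set v1 := v (i 1)
  set v2 := v (i 2)
  set v3 := v (i 3)
  set v4 := v (i 4)
  set v5 := v (i 5)
  have g1 : B u v2 v5 v0 = B u v0 v2 v5 := B_cyc hd u v2 v5 v0
  have g2 : B u v3 v5 v0 = B u v0 v3 v5 := B_cyc hd u v3 v5 v0
  -- six Grassmann–Plücker instances in sorted form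
  have R1 : B u v0 v1 v3 * B u v0 v2 v5 - B u v0 v1 v2 * B u v0 v3 v5
      - B u v0 v1 v5 * B u v0 v2 v3 = 0 := by
    have P := pluecker hd u v0 v1 v3 v2 v5
    rw [show B u v0 v3 v2 = -B u v0 v2 v3 from B_swap12 hd u v0 v3 v2] at P
    linear_combination P
  have R2 : B u v0 v3 v4 * B u v1 v2 v3 - B u v1 v3 v4 * B u v0 v2 v3
      + B u v2 v3 v4 * B u v0 v1 v3 = 0 := by
    have P := pluecker hd u v3 v4 v0 v1 v2
    rw [show B u v3 v4 v0 = B u v0 v3 v4 from B_cyc hd u v3 v4 v0,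
      show B u v3 v1 v2 = B u v1 v2 v3 from B_cyc2 hd u v3 v1 v2,
      show B u v3 v4 v1 = B u v1 v3 v4 from B_cyc hd u v3 v4 v1,
      show B u v3 v0 v2 = B u v0 v2 v3 from B_cyc2 hd u v3 v0 v2,
      show B u v3 v4 v2 = B u v2 v3 v4 from B_cyc hd u v3 v4 v2,
      show B u v3 v0 v1 = B u v0 v1 v3 from B_cyc2 hd u v3 v0 v1] at P
    linear_combination P
  have R3 : B u v1 v3 v4 * B u v0 v1 v5 + B u v0 v1 v3 * B u v1 v4 v5
      - B u v1 v3 v5 * B u v0 v1 v4 = 0 := by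
    have P := pluecker hd u v1 v3 v4 v0 v5
    rw [show B u v1 v0 v5 = -B u v0 v1 v5 from B_swap01 hd u v1 v0 v5,
      show B u v1 v3 v0 = B u v0 v1 v3 from B_cyc hd u v1 v3 v0,
      show B u v1 v4 v0 = B u v0 v1 v4 from B_cyc hd u v1 v4 v0] at P
    linear_combination -P
  have R4 : B u v0 v1 v4 * B u v0 v2 v3 + B u v0 v1 v2 * B u v0 v3 v4
      - B u v0 v1 v3 * B u v0 v2 v4 = 0 := by
    have P := pluecker hd u v0 v1 v4 v2 v3
    rw [show B u v0 v4 v3 = -B u v0 v3 v4 from B_swap12 hd u v0 v4 v3,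
      show B u v0 v4 v2 = -B u v0 v2 v4 from B_swap12 hd u v0 v4 v2] at P
    linear_combination P
  have R5 : B u v2 v4 v5 * B u v1 v3 v5 - B u v1 v2 v5 * B u v3 v4 v5
      - B u v2 v3 v5 * B u v1 v4 v5 = 0 := by
    have P := pluecker hd u v5 v2 v4 v1 v3
    rw [show B u v5 v2 v4 = B u v2 v4 v5 from B_cyc2 hd u v5 v2 v4,
      show B u v5 v1 v3 = B u v1 v3 v5 from B_cyc2 hd u v5 v1 v3,
      show B u v5 v2 v1 = -B u v1 v2 v5 from by
        rw [B_swap12 hd u v5 v2 v1, B_cyc2 hd u v5 v1 v2],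
      show B u v5 v4 v3 = -B u v3 v4 v5 from by
        rw [B_swap12 hd u v5 v4 v3, B_cyc2 hd u v5 v3 v4],
      show B u v5 v2 v3 = B u v2 v3 v5 from B_cyc2 hd u v5 v2 v3,
      show B u v5 v4 v1 = -B u v1 v4 v5 from by
        rw [B_swap12 hd u v5 v4 v1, B_cyc2 hd u v5 v1 v4]] at P
    linear_combination P
  have R6 : B u v0 v2 v4 * B u v2 v3 v5 - B u v0 v2 v3 * B u v2 v4 v5
      - B u v0 v2 v5 * B u v2 v3 v4 = 0 := by
    have P := pluecker hd u v2 v4 v0 v3 v5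
    rw [show B u v2 v4 v0 = B u v0 v2 v4 from B_cyc hd u v2 v4 v0,
      show B u v2 v4 v3 = -B u v2 v3 v4 from B_swap12 hd u v2 v4 v3,
      show B u v2 v0 v5 = -B u v0 v2 v5 from B_swap01 hd u v2 v0 v5,
      show B u v2 v0 v3 = -B u v0 v2 v3 from B_swap01 hd u v2 v0 v3] at P
    linear_combination P
  have key : B u v0 v3 v4 * B u v1 v4 v5 * B u v0 v2 v5 * B u v1 v2 v3
      - B u v1 v3 v4 * B u v2 v4 v5 * B u v0 v3 v5 * B u v0 v1 v2
      + B u v1 v3 v4 * B u v2 v4 v5 * B u v0 v2 v5 * B u v0 v1 v3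
      - B u v1 v3 v4 * B u v1 v4 v5 * B u v0 v2 v5 * B u v0 v2 v3
      + (B u v0 v1 v2 * B u v0 v3 v4 * B u v1 v3 v5 * B u v2 v4 v5
      - B u v0 v1 v3 * B u v0 v2 v4 * B u v1 v2 v5 * B u v3 v4 v5) = 0 := by
    linear_combination (B u v1 v3 v4 * B u v2 v4 v5) * R1 + (B u v0 v2 v5 * B u v1 v4 v5) * R2
      + (B u v2 v4 v5 * B u v0 v2 v3) * R3 + (B u v2 v4 v5 * B u v1 v3 v5) * R4
      + (B u v0 v1 v3 * B u v0 v2 v4) * R5 + (B u v0 v1 v3 * B u v1 v4 v5) * R6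
  constructor
  · intro h
    rw [g1, g2] at h
    linear_combination key - h
  · intro h
    rw [g1, g2]
    linear_combination key - h
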